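/- For any fixed n ≥ 1, N ≥ 1, ω with 1 ≤ ω ≤ N, and any integer matrix W, the sum ∑_{U ∈ GL_n(ℤ), U ≡ W (mod N)} exp(−‖U‖²/ω) is bounded by a constant depending only on n (independent of N, ω, W). -/

import Mathlib

open Matrix

lemma exp_abs_summable : Summable fun q : ℤ => Real.exp (-|(q : ℝ)|) := by
  apply Summable.of_nat_of_neg <;> simpa using Real.summable_exp_neg_nat

lemma pi_prod_summable (f : ℤ → ℝ) (h0 : ∀ q, 0 ≤ f q) (hs : Summable f) (m : ℕ) :
    Summable (fun b : Fin m → ℤ => ∏ i, f (b i)) ∧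
      ∑' b : Fin m → ℤ, ∏ i, f (b i) = (∑' q, f q) ^ m := by
  induction m with
  | zero =>
    refine ⟨Summable.of_finite, ?_⟩
    have : ∀ b : Fin 0 → ℤ, ∏ i, f (b i) = 1 := by intro b; simp
    rw [tsum_congr this, tsum_const]
    simp
  | succ k ih =>
    set e := (Fin.consEquiv fun _ : Fin (k+1) => ℤ).symm with he
    have hcomp : ∀ b : Fin (k+1) → ℤ, ∏ i, f (b i) = f (e b).1 * ∏ i : Fin k, f ((e b).2 i) := by
      intro b
      rw [Fin.prod_univ_succ]
      rfl
    have hprod : Summable (fun p : ℤ × (Fin k → ℤ) => f p.1 * ∏ i, f (p.2 i)) := by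
      apply Summable.mul_of_nonneg hs ih.1 h0
      intro b
      exact Finset.prod_nonneg fun i _ => h0 _
    have hsum : Summable (fun b : Fin (k+1) → ℤ => ∏ i, f (b i)) := by
      rw [show (fun b : Fin (k+1) → ℤ => ∏ i, f (b i))
          = (fun p : ℤ × (Fin k → ℤ) => f p.1 * ∏ i, f (p.2 i)) ∘ e from funext hcomp]
      exact (Equiv.summable_iff e).2 hprod
    refine ⟨hsum, ?_⟩
    calc ∑' b : Fin (k+1) → ℤ, ∏ i, f (b i)
        = ∑' p : ℤ × (Fin k → ℤ), f p.1 * ∏ i, f (p.2 i) := by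
          rw [← Equiv.tsum_eq e]; exact tsum_congr hcomp
      _ = (∑' q, f q) * ∑' b : Fin k → ℤ, ∏ i, f (b i) := (Summable.tsum_mul_tsum hs ih.1 hprod).symm
      _ = (∑' q, f q) ^ (k+1) := by rw [ih.2, pow_succ]; ring

lemma entry_bound (N : ℕ) (hN : 1 ≤ N) (ω : ℝ) (hω : 1 ≤ ω) (hωN : ω ≤ N) (u : ℤ) :
    Real.exp (-(u : ℝ) ^ 2 / ω) ≤ Real.exp 1 * Real.exp (-|(Int.cast (u / (N : ℤ)) : ℝ)|) := by
  have hN0 : (0 : ℤ) < N := by exact_mod_cast hN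
  set q : ℤ := u / (N : ℤ) with hq
  have hr0 : 0 ≤ u % (N : ℤ) := Int.emod_nonneg u (by omega)
  have hrN : u % (N : ℤ) < N := Int.emod_lt_of_pos u hN0
  have hu : (N : ℤ) * q + u % (N : ℤ) = u := Int.mul_ediv_add_emod u N
  have key : (|q| - 1) * N ≤ |u| := by
    have h1 : |(N : ℤ) * q| ≤ |u| + u % (N : ℤ) := by
      have h3 : (N:ℤ) * q = u - u % (N : ℤ) := by linarith
      calc |(N : ℤ) * q| = |u - u % (N : ℤ)| := by rw [h3]
        _ ≤ |u| + |u % (N : ℤ)| := abs_sub _ _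
        _ = |u| + u % (N : ℤ) := by rw [abs_of_nonneg hr0]
    have h2 : |(N : ℤ) * q| = N * |q| := by
      rw [abs_mul, abs_of_nonneg (by omega : (0:ℤ) ≤ (N:ℤ))]
    nlinarith
  rw [← Real.exp_add, Real.exp_le_exp, ← Int.cast_abs]
  set a : ℝ := ((|q| : ℤ) : ℝ) with ha
  have hω0 : (0 : ℝ) < ω := by linarith
  have hNR : (1 : ℝ) ≤ (N : ℝ) := by exact_mod_cast hN
  rcases eq_or_ne q 0 with h | h
  · have h0 : a = 0 := by simp [ha, h]
    have : (0:ℝ) ≤ (u:ℝ)^2 / ω := div_nonneg (sq_nonneg _) hω0.le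
    rw [neg_div]
    linarith
  · have hq1 : 1 ≤ |q| := Int.one_le_abs h
    have ha1 : (1 : ℝ) ≤ a := by rw [ha]; exact_mod_cast hq1
    have hqsq : |q| - 1 ≤ (|q| - 1) ^ 2 := by nlinarith
    have hasq : a - 1 ≤ (a - 1) ^ 2 := by rw [ha]; exact_mod_cast hqsq
    have habs : ((|u| : ℤ) : ℝ) = |(u : ℝ)| := by push_cast; ring
    have keyR : (a - 1) * (N : ℝ) ≤ |(u : ℝ)| := by
      rw [ha, ← habs]; exact_mod_cast key
    have hsq : ((a - 1) * (N : ℝ)) ^ 2 ≤ (u : ℝ) ^ 2 := by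
      rw [← sq_abs ((u:ℝ))]
      have h0 : 0 ≤ (a - 1) * (N : ℝ) := by nlinarith
      nlinarith [abs_nonneg (u:ℝ)]
    have s1 : (a-1)*ω ≤ (a-1)*(N:ℝ) := mul_le_mul_of_nonneg_left hωN (by linarith)
    have s2 : (a-1)*(N:ℝ) ≤ (a-1)^2*(N:ℝ) := mul_le_mul_of_nonneg_right hasq (by linarith)
    have s3 : (a-1)^2*(N:ℝ) ≤ (a-1)^2*(N:ℝ)^2 := by nlinarith [sq_nonneg (a-1)]
    have hfin : (a - 1) * ω ≤ (u:ℝ)^2 := by nlinarith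
    have : a - 1 ≤ (u:ℝ)^2 / ω := (le_div_iff₀ hω0).2 hfin
    rw [neg_div]
    linarith

/-- For fixed `n ≥ 1`, uniformly in `N ≥ 1`, `1 ≤ ω ≤ N` and the integer matrix
`W`, the sum `∑_{U ∈ GL_n(ℤ), U ≡ W (mod N)} exp(-‖U‖²/ω)` is bounded by a
constant depending only on `n`. -/
theorem stmt13 (n : ℕ) (hn : 1 ≤ n) :
    ∃ C : ℝ, 0 < C ∧
      ∀ (N : ℕ), 1 ≤ N → ∀ ω : ℝ, 1 ≤ ω → ω ≤ (N : ℝ) →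
      ∀ W : Matrix (Fin n) (Fin n) ℤ,
        Summable (fun U : {U : Matrix (Fin n) (Fin n) ℤ //
            IsUnit U.det ∧ ∀ i j, ∃ b : ℤ, U i j = W i j + b * N} =>
          Real.exp (-(∑ i, ∑ j, ((U.1 i j : ℝ)) ^ 2) / ω)) ∧
        ∑' U : {U : Matrix (Fin n) (Fin n) ℤ //
            IsUnit U.det ∧ ∀ i j, ∃ b : ℤ, U i j = W i j + b * N},
          Real.exp (-(∑ i, ∑ j, ((U.1 i j : ℝ)) ^ 2) / ω) ≤ C := by
  classical
  set f : ℤ → ℝ := fun q => Real.exp 1 * Real.exp (-|(q : ℝ)|) with hf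
  have hf0 : ∀ q, 0 ≤ f q := fun q => mul_nonneg (Real.exp_pos 1).le (Real.exp_pos _).le
  have hfs : Summable f := exp_abs_summable.mul_left _
  set K := ∑' q, f q with hK
  have hKpos : 0 < K := by
    have h0 : (0:ℝ) < f 0 := by
      simp only [hf]
      positivity
    exact lt_of_lt_of_le h0 (Summable.le_tsum hfs 0 fun j _ => hf0 j)
  refine ⟨K ^ (n*n), pow_pos hKpos _, ?_⟩
  intro N hN ω hω hωN W
  have hNe : ((N : ℤ)) ≠ 0 := by
    have : (0:ℤ) < N := by exact_mod_cast hN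
    exact this.ne'
  set g : (Fin n × Fin n → ℤ) → ℝ := fun b => ∏ p, f (b p) with hg
  have hg0 : ∀ b, 0 ≤ g b := fun b => Finset.prod_nonneg fun p _ => hf0 _
  obtain ⟨hsumFin, htsumFin⟩ := pi_prod_summable f hf0 hfs (n*n)
  set e3 : (Fin n × Fin n → ℤ) ≃ (Fin (n*n) → ℤ) :=
    Equiv.arrowCongr finProdFinEquiv (Equiv.refl ℤ) with he3
  have hgeq : g = (fun c : Fin (n*n) → ℤ => ∏ i, f (c i)) ∘ e3 := by
    funext b
    simp only [Function.comp_apply, hg]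
    rw [← Equiv.prod_comp finProdFinEquiv.symm (fun p => f (b p))]
    rfl
  have hgs : Summable g := by rw [hgeq]; exact (Equiv.summable_iff e3).2 hsumFin
  have hgt : ∑' b, g b = K ^ (n*n) := by
    rw [hgeq]
    simp only [Function.comp_apply]
    rw [Equiv.tsum_eq e3 (fun c : Fin (n*n) → ℤ => ∏ i, f (c i))]
    exact htsumFin
  set S := {U : Matrix (Fin n) (Fin n) ℤ //
      IsUnit U.det ∧ ∀ i j, ∃ b : ℤ, U i j = W i j + b * N} with hS
  set φ : S → (Fin n × Fin n → ℤ) := fun U p => U.1 p.1 p.2 / (N : ℤ) with hφ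
  have hinj : Function.Injective φ := by
    intro U U' hUU'
    apply Subtype.ext
    ext i j
    obtain ⟨b, hb⟩ := U.2.2 i j
    obtain ⟨b', hb'⟩ := U'.2.2 i j
    have h := congrFun hUU' (i, j)
    simp only [hφ] at h
    rw [hb, hb', Int.add_mul_ediv_right _ _ hNe, Int.add_mul_ediv_right _ _ hNe] at h
    have hbb : b = b' := by omega
    rw [hb, hb', hbb]
  have hpt : ∀ U : S, Real.exp (-(∑ i, ∑ j, ((U.1 i j : ℝ)) ^ 2) / ω) ≤ g (φ U) := by
    intro U
    have h1 : -(∑ i, ∑ j, ((U.1 i j : ℝ)) ^ 2) / ω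
        = ∑ p : Fin n × Fin n, -((U.1 p.1 p.2 : ℝ)) ^ 2 / ω := by
      rw [← Fintype.sum_prod_type (f := fun p : Fin n × Fin n => ((U.1 p.1 p.2 : ℝ)) ^ 2)]
      rw [neg_div, Finset.sum_div]
      rw [← Finset.sum_neg_distrib]
      congr 1
      funext p
      ring
    rw [h1, Real.exp_sum]
    apply Finset.prod_le_prod
    · intro p _; positivity
    · intro p _
      simpa only [hf, hφ] using entry_bound N hN ω hω hωN (U.1 p.1 p.2)
  have hsummand : Summable (fun U : S => Real.exp (-(∑ i, ∑ j, ((U.1 i j : ℝ)) ^ 2) / ω)) :=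
    Summable.of_nonneg_of_le (fun U => (Real.exp_pos _).le) hpt (hgs.comp_injective hinj)
  refine ⟨hsummand, ?_⟩
  calc ∑' U : S, Real.exp (-(∑ i, ∑ j, ((U.1 i j : ℝ)) ^ 2) / ω)
      ≤ ∑' b, g b := Summable.tsum_le_tsum_of_inj φ hinj (fun c _ => hg0 c) hpt hsummand hgs
    _ = K ^ (n*n) := hgt
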